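/- For a set X of objects of a small category 𝓘 of generating cofibrations regarded as a discrete subcategory 𝓢, and 𝓘_𝓢 = 𝓘 ⊔ 𝓢 with J_𝓢 agreeing with J on 𝓘 and J_𝓢(s) = J(s)' on 𝓢, an R_𝓢-algebra structure on a morphism f : X → Y (for the awfs (L_𝓢, R_𝓢) cofibrantly generated by J_𝓢) is exactly an R-algebra structure (for the awfs generated by J) together with the property that f has the unique right lifting property with respect to the morphisms J(s), s ∈ 𝓢. -/

import Mathlib

open CategoryTheory Limits

universe v u w

variable {E : Type u} [Category.{v} E]

/-- The structure of coherent chosen diagonal fillers for all squares from the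
generating cofibrations `J : 𝓘 ⥤ 𝓔^[1]` to `f`, natural in `𝓘`.  By Garner's small
object argument this is exactly an algebra structure on `f` for the monad `R` of the
algebraic weak factorisation system cofibrantly generated by `J`. -/
structure AlgFillers {I : Type w} [Category.{w} I] (J : I ⥤ Arrow E)
    {X Y : E} (f : X ⟶ Y) where
  lift : ∀ (i : I) (sq : J.obj i ⟶ Arrow.mk f), (J.obj i).right ⟶ X
  fac_left : ∀ (i : I) (sq : J.obj i ⟶ Arrow.mk f),
    (J.obj i).hom ≫ lift i sq = sq.left
  fac_right : ∀ (i : I) (sq : J.obj i ⟶ Arrow.mk f), lift i sq ≫ f = sq.right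
  natural : ∀ {i i' : I} (d : i ⟶ i') (sq : J.obj i' ⟶ Arrow.mk f),
    lift i (J.map d ≫ sq) = (J.map d).right ≫ lift i' sq

/-- Chosen diagonal fillers against a single arrow `g` (no naturality). -/
structure SingleFillers (g : Arrow E) {X Y : E} (f : X ⟶ Y) where
  lift : ∀ _sq : g ⟶ Arrow.mk f, g.right ⟶ X
  fac_left : ∀ sq : g ⟶ Arrow.mk f, g.hom ≫ lift sq = sq.left
  fac_right : ∀ sq : g ⟶ Arrow.mk f, lift sq ≫ f = sq.right

/-- The unique right lifting property against `g`. -/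
def UniqueRLP (g : Arrow E) {X Y : E} (f : X ⟶ Y) : Prop :=
  ∀ sq : g ⟶ Arrow.mk f, ∃! l : g.right ⟶ X, g.hom ≫ l = sq.left ∧ l ≫ f = sq.right

/-- The Bousfield construction `φ'` on an arrow `φ`: the map from the pushout of `φ`
along itself to the codomain, induced by identities. -/
noncomputable def bousfieldArrow [HasPushouts E] (g : Arrow E) : Arrow E :=
  Arrow.mk (pushout.desc (𝟙 g.right) (𝟙 g.right) rfl : pushout g.hom g.hom ⟶ g.right)

/-- For a set `𝓢` of objects of a small category `𝓘` of generating
cofibrations, regarded as a discrete subcategory, let `J_𝓢 = J ⊔ (Bousfield primes of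
J on 𝓢)`.  Then an `R_𝓢`-algebra structure on `f` — i.e. coherent natural fillers
against `J` together with fillers against the primed maps `J(s)'` for `s ∈ 𝓢` — is
exactly an `R`-algebra structure on `f` together with the property that `f` has the
unique right lifting property with respect to the morphisms `J(s)`, `s ∈ 𝓢`. -/
theorem semiStrict_algebras [HasPushouts E] {I : Type w} [Category.{w} I]
    (J : I ⥤ Arrow E) (S : Set I) {X Y : E} (f : X ⟶ Y) :
    ∃ e : (AlgFillers J f × ∀ s : S, SingleFillers (bousfieldArrow (J.obj s.1)) f) ≃
        (AlgFillers J f × PLift (∀ s ∈ S, UniqueRLP (J.obj s) f)),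
      ∀ x, (e x).1 = x.1 := by
  classical
  -- Any filler against the Bousfield arrow is forced to be `inl ≫ sq.left`.
  have lift_eq : ∀ (s : I) (F : SingleFillers (bousfieldArrow (J.obj s)) f)
      (sq : bousfieldArrow (J.obj s) ⟶ Arrow.mk f),
      F.lift sq = pushout.inl (J.obj s).hom (J.obj s).hom ≫ sq.left := by
    intro s F sq
    have h := F.fac_left sq
    have h' := congrArg (fun t => pushout.inl (J.obj s).hom (J.obj s).hom ≫ t) h
    simp only [bousfieldArrow, Arrow.mk_hom] at h'
    rw [pushout.inl_desc_assoc] at h'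
    simp only [Category.id_comp] at h'
    exact h'
  -- From fillers against the Bousfield arrow, lifts against `J.obj s` are unique.
  have uniq : ∀ (s : I), SingleFillers (bousfieldArrow (J.obj s)) f →
      ∀ (sq : J.obj s ⟶ Arrow.mk f) (l₁ l₂ : (J.obj s).right ⟶ X),
      (J.obj s).hom ≫ l₁ = sq.left → l₁ ≫ f = sq.right →
      (J.obj s).hom ≫ l₂ = sq.left → l₂ ≫ f = sq.right → l₁ = l₂ := by
    intro s F sq l₁ l₂ hl₁ hr₁ hl₂ hr₂
    let g := J.obj s
    have hcomm : g.hom ≫ l₁ = g.hom ≫ l₂ := by rw [hl₁, hl₂]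
    let sq' : bousfieldArrow g ⟶ Arrow.mk f :=
      Arrow.homMk (u := pushout.desc l₁ l₂ hcomm) (v := sq.right) (by
        show pushout.desc l₁ l₂ hcomm ≫ f =
          pushout.desc (𝟙 g.right) (𝟙 g.right) rfl ≫ sq.right
        apply pushout.hom_ext
        · rw [pushout.inl_desc_assoc, pushout.inl_desc_assoc, Category.id_comp, hr₁]
        · rw [pushout.inr_desc_assoc, pushout.inr_desc_assoc, Category.id_comp, hr₂])
    have hfac := F.fac_left sq'
    have h1 := congrArg (fun t => pushout.inl g.hom g.hom ≫ t) hfac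
    have h2 := congrArg (fun t => pushout.inr g.hom g.hom ≫ t) hfac
    simp only [bousfieldArrow] at h1 h2
    have e1 : F.lift sq' = l₁ := by
      rw [lift_eq s F sq']; exact pushout.inl_desc l₁ l₂ hcomm
    have e2 : F.lift sq' = l₂ := by
      obtain ⟨m, hm⟩ : ∃ m : g.right ⟶ X, m = F.lift sq' := ⟨_, rfl⟩
      have h2' : pushout.desc (𝟙 g.right) (𝟙 g.right) rfl ≫ m =
          pushout.desc l₁ l₂ hcomm := by rw [hm]; exact hfac
      rw [← hm]
      have h2'' := pushout.inr g.hom g.hom ≫= h2'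
      rw [pushout.inr_desc_assoc, pushout.inr_desc, Category.id_comp] at h2''
      exact h2''
    rw [← e1, e2]
  -- Construct fillers against the Bousfield arrow from the unique RLP.
  have mk : ∀ (s : I), UniqueRLP (J.obj s) f →
      SingleFillers (bousfieldArrow (J.obj s)) f := by
    intro s h
    refine ⟨fun sq => pushout.inl (J.obj s).hom (J.obj s).hom ≫ sq.left, ?_, ?_⟩
    · intro sq
      let g := J.obj s
      have hw : sq.left ≫ f = pushout.desc (𝟙 g.right) (𝟙 g.right) rfl ≫ sq.right :=
        sq.w
      have hw1 : (pushout.inl g.hom g.hom ≫ sq.left) ≫ f = sq.right := by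
        erw [Category.assoc, hw, pushout.inl_desc_assoc, Category.id_comp]
      have hw2 : (pushout.inr g.hom g.hom ≫ sq.left) ≫ f = sq.right := by
        erw [Category.assoc, hw, pushout.inr_desc_assoc, Category.id_comp]
      -- the two legs agree by uniqueness
      have hsq : (g.hom ≫ pushout.inl g.hom g.hom ≫ sq.left) ≫ f =
          g.hom ≫ sq.right := by
        rw [Category.assoc, hw1]
      let sq2 : g ⟶ Arrow.mk f :=
        Arrow.homMk (u := g.hom ≫ pushout.inl g.hom g.hom ≫ sq.left)
          (v := sq.right) hsq
      obtain ⟨l, _, hu⟩ := h sq2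
      have e1 : pushout.inl g.hom g.hom ≫ sq.left = l :=
        hu _ ⟨rfl, hw1⟩
      have e2 : pushout.inr g.hom g.hom ≫ sq.left = l :=
        hu _ ⟨by
          show g.hom ≫ pushout.inr g.hom g.hom ≫ sq.left =
            g.hom ≫ pushout.inl g.hom g.hom ≫ sq.left
          erw [← Category.assoc, ← Category.assoc, pushout.condition], hw2⟩
      show pushout.desc (𝟙 g.right) (𝟙 g.right) rfl ≫
          pushout.inl g.hom g.hom ≫ sq.left = sq.left
      have key : pushout.inl g.hom g.hom ≫ sq.left =
          pushout.inr g.hom g.hom ≫ sq.left := e1.trans e2.symm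
      apply pushout.hom_ext
      · erw [pushout.inl_desc_assoc, Category.id_comp]
      · erw [pushout.inr_desc_assoc, Category.id_comp]; exact key
    · intro sq
      have hw : sq.left ≫ f =
          pushout.desc (𝟙 (J.obj s).right) (𝟙 (J.obj s).right) rfl ≫ sq.right :=
        sq.w
      erw [Category.assoc, hw, pushout.inl_desc_assoc, Category.id_comp]
  refine ⟨{
    toFun := fun x => ⟨x.1, ⟨fun s hs sq =>
      ⟨x.1.lift s sq, ⟨x.1.fac_left s sq, x.1.fac_right s sq⟩,
        fun y hy => uniq s (x.2 ⟨s, hs⟩) sq y (x.1.lift s sq) hy.1 hy.2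
          (x.1.fac_left s sq) (x.1.fac_right s sq)⟩⟩⟩
    invFun := fun x => ⟨x.1, fun s => mk s.1 (x.2.down s.1 s.2)⟩
    left_inv := ?_
    right_inv := ?_ }, fun _ => rfl⟩
  · have single_ext : ∀ (s : I) (F₁ F₂ : SingleFillers (bousfieldArrow (J.obj s)) f),
        F₁ = F₂ := by
      intro s F₁ F₂
      obtain ⟨l₁, fl₁, fr₁⟩ := F₁
      obtain ⟨l₂, fl₂, fr₂⟩ := F₂
      have : l₁ = l₂ := by
        funext sq
        exact (lift_eq s ⟨l₁, fl₁, fr₁⟩ sq).trans (lift_eq s ⟨l₂, fl₂, fr₂⟩ sq).symm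
      cases this; rfl
    rintro ⟨A, F⟩
    exact Prod.ext rfl (funext fun s => single_ext s.1 _ _)
  · rintro ⟨A, ⟨p⟩⟩
    rfl
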